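/- Let U be a real Hilbert space and G : U → (−∞,∞] proper, convex and lower semicontinuous. For r > 0 and v ∈ U let prox_{rG}(v) denote the unique minimizer over U of w ↦ G(w) + (1/(2r))‖w − v‖². Fix v, d ∈ U and define Φ : (0,∞) → [0,∞) by Φ(r) := ‖prox_{rG}(v + r·d) − v‖. Then Φ is nondecreasing and r ↦ Φ(r)/r is nonincreasing on (0,∞). -/

import Mathlib

open scoped RealInnerProductSpace

/-- Pure algebra: from `s A² + r B² ≤ (r+s) A B` with `0 < r ≤ s`, `A, B ≥ 0`,
conclude `A ≤ B` and `B r ≤ A s`. -/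
private lemma prox_alg {A B r s : ℝ} (hA : 0 ≤ A) (hB : 0 ≤ B) (hr : 0 < r) (hs : 0 < s)
    (hrs : r ≤ s) (h : s * A ^ 2 + r * B ^ 2 ≤ (r + s) * (A * B)) :
    A ≤ B ∧ B * r ≤ A * s := by
  constructor
  · by_contra hc
    push_neg at hc
    have h' : 0 < A - B := sub_pos.mpr hc
    nlinarith [mul_pos hs (mul_pos h' h'),
      mul_nonneg (mul_nonneg (sub_nonneg.mpr hrs) hB) h'.le]
  · by_contra hc
    push_neg at hc
    have hAB : A < B := by nlinarith
    nlinarith [mul_pos (sub_pos.mpr hAB) (sub_pos.mpr hc)]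

/-- The map `r ↦ ‖prox_{rG}(v + r d) - v‖` is nondecreasing and
`r ↦ ‖prox_{rG}(v + r d) - v‖ / r` is nonincreasing on `(0, ∞)`. -/
theorem prox_parameter_monotonicity
    {U : Type*} [NormedAddCommGroup U] [InnerProductSpace ℝ U] [CompleteSpace U]
    (G : U → EReal)
    -- `G` is proper
    (hGbot : ∀ v : U, G v ≠ ⊥) (hGtop : ∃ v : U, G v ≠ ⊤)
    -- `G` is convex
    (hGconv : ∀ v w : U, ∀ t : ℝ, 0 ≤ t → t ≤ 1 →
      G (t • v + (1 - t) • w) ≤ (t : EReal) * G v + ((1 - t : ℝ) : EReal) * G w)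
    -- `G` is lower semicontinuous
    (hGlsc : LowerSemicontinuous G)
    -- `prox r v` is the (unique) minimizer of `w ↦ G w + ‖w - v‖² / (2 r)`
    (prox : ℝ → U → U)
    (hprox : ∀ r : ℝ, 0 < r → ∀ v w : U,
      G (prox r v) + ((‖prox r v - v‖ ^ 2 / (2 * r) : ℝ) : EReal) ≤
        G w + ((‖w - v‖ ^ 2 / (2 * r) : ℝ) : EReal))
    (v d : U) :
    MonotoneOn (fun r : ℝ => ‖prox r (v + r • d) - v‖) (Set.Ioi (0 : ℝ)) ∧
    AntitoneOn (fun r : ℝ => ‖prox r (v + r • d) - v‖ / r) (Set.Ioi (0 : ℝ)) := by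
  obtain ⟨w₀, hw₀⟩ := hGtop
  -- finiteness of G at prox points
  have hfin : ∀ r : ℝ, 0 < r → ∃ g : ℝ, G (prox r (v + r • d)) = (g : EReal) := by
    intro r hr
    have h := hprox r hr (v + r • d) w₀
    have hne : G (prox r (v + r • d)) ≠ ⊤ := by
      intro htop
      rw [htop, EReal.top_add_coe] at h
      exact absurd h (not_le.mpr (EReal.add_lt_top hw₀ (EReal.coe_ne_top _)))
    exact ⟨(G (prox r (v + r • d))).toReal, (EReal.coe_toReal hne (hGbot _)).symm⟩
  -- one-sided subgradient-type inequality
  have key1 : ∀ r s : ℝ, 0 < r → 0 < s → ∀ gr gs : ℝ,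
      G (prox r (v + r • d)) = (gr : EReal) → G (prox s (v + s • d)) = (gs : EReal) →
      gr ≤ gs + ⟪prox r (v + r • d) - (v + r • d),
                 prox s (v + s • d) - prox r (v + r • d)⟫ / r := by
    intro r s hr hs gr gs hgr hgs
    have hstep : ∀ t : ℝ, 0 < t → t ≤ 1 →
        gr ≤ gs + ⟪prox r (v + r • d) - (v + r • d),
                   prox s (v + s • d) - prox r (v + r • d)⟫ / r +
          t * (‖prox s (v + s • d) - prox r (v + r • d)‖ ^ 2 / (2 * r)) := by
      intro t ht0 ht1
      set pr := prox r (v + r • d) with hpr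
      set ps := prox s (v + s • d) with hps
      set x := pr - (v + r • d) with hx
      set y := ps - pr with hy
      have h1 := hprox r hr (v + r • d) (t • ps + (1 - t) • pr)
      rw [← hpr, ← hx] at h1
      have h2 := hGconv ps pr t ht0.le ht1
      rw [hgr, hgs] at h2
      have h2' : G (t • ps + (1 - t) • pr) ≤ ((t * gs + (1 - t) * gr : ℝ) : EReal) := by
        rw [EReal.coe_add, EReal.coe_mul, EReal.coe_mul]
        exact h2
      have h3 : ((gr : EReal)) + ((‖x‖ ^ 2 / (2 * r) : ℝ) : EReal) ≤
          ((t * gs + (1 - t) * gr : ℝ) : EReal) +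
            ((‖t • ps + (1 - t) • pr - (v + r • d)‖ ^ 2 / (2 * r) : ℝ) : EReal) := by
        rw [hgr] at h1
        exact h1.trans (add_le_add h2' le_rfl)
      rw [← EReal.coe_add, ← EReal.coe_add, EReal.coe_le_coe_iff] at h3
      have hpt : t • ps + (1 - t) • pr - (v + r • d) = x + t • y := by
        rw [hx, hy]; module
      rw [hpt] at h3
      have hexp : ‖x + t • y‖ ^ 2 = ‖x‖ ^ 2 + 2 * (t * ⟪x, y⟫) + t ^ 2 * ‖y‖ ^ 2 := by
        rw [norm_add_sq_real, real_inner_smul_right, norm_smul, Real.norm_eq_abs,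
          abs_of_pos ht0]
        ring
      rw [hexp] at h3
      have hsplit : (‖x‖ ^ 2 + 2 * (t * ⟪x, y⟫) + t ^ 2 * ‖y‖ ^ 2) / (2 * r) =
          ‖x‖ ^ 2 / (2 * r) + t * (⟪x, y⟫ / r) + t * (t * (‖y‖ ^ 2 / (2 * r))) := by
        field_simp
      rw [hsplit] at h3
      -- h3 : gr + ‖x‖²/(2r) ≤ t gs + (1-t) gr + (‖x‖²/(2r) + t ⟪x,y⟫/r + t² ‖y‖²/(2r))
      have h4 : t * gr ≤ t * (gs + ⟪x, y⟫ / r + t * (‖y‖ ^ 2 / (2 * r))) := by nlinarith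
      exact le_of_mul_le_mul_left (by linarith [h4]) ht0
    apply le_of_forall_pos_le_add
    intro ε hε
    set k := ‖prox s (v + s • d) - prox r (v + r • d)‖ ^ 2 / (2 * r) with hk
    have hk0 : 0 ≤ k := by positivity
    set t := min 1 (ε / (k + 1)) with ht
    have ht0 : 0 < t := lt_min one_pos (div_pos hε (by linarith))
    have ht1 : t ≤ 1 := min_le_left _ _
    have hst := hstep t ht0 ht1
    have htk : t * k ≤ ε := by
      calc t * k ≤ (ε / (k + 1)) * k :=
            mul_le_mul_of_nonneg_right (min_le_right _ _) hk0
        _ ≤ ε := by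
            rw [div_mul_eq_mul_div, div_le_iff₀ (by linarith)]
            nlinarith
    linarith
  -- the combined inequality
  have key : ∀ r s : ℝ, 0 < r → 0 < s →
      s * ‖prox r (v + r • d) - v‖ ^ 2 + r * ‖prox s (v + s • d) - v‖ ^ 2 ≤
        (r + s) * (‖prox r (v + r • d) - v‖ * ‖prox s (v + s • d) - v‖) := by
    intro r s hr hs
    obtain ⟨gr, hgr⟩ := hfin r hr
    obtain ⟨gs, hgs⟩ := hfin s hs
    have h1 := key1 r s hr hs gr gs hgr hgs
    have h2 := key1 s r hs hr gs gr hgs hgr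
    set pr := prox r (v + r • d) with hpr
    set ps := prox s (v + s • d) with hps
    set a := pr - v with ha
    set b := ps - v with hb
    have e1 : pr - (v + r • d) = a - r • d := by rw [ha]; module
    have e2 : ps - (v + s • d) = b - s • d := by rw [hb]; module
    have e3 : ps - pr = b - a := by rw [ha, hb]; module
    have e4 : pr - ps = a - b := by rw [ha, hb]; module
    rw [e1, e3] at h1
    rw [e2, e4] at h2
    have h5 : 0 ≤ ⟪a - r • d, b - a⟫ / r + ⟪b - s • d, a - b⟫ / s := by linarith
    have h6 : ⟪a - r • d, b - a⟫ = ⟪a, b⟫ - ‖a‖ ^ 2 - r * ⟪d, b - a⟫ := by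
      rw [inner_sub_left, real_inner_smul_left, inner_sub_right (𝕜 := ℝ) a b a,
        real_inner_self_eq_norm_sq]
    have h7 : ⟪b - s • d, a - b⟫ = ⟪b, a⟫ - ‖b‖ ^ 2 - s * ⟪d, a - b⟫ := by
      rw [inner_sub_left, real_inner_smul_left, inner_sub_right (𝕜 := ℝ) b a b,
        real_inner_self_eq_norm_sq]
    have h8 : ⟪d, a - b⟫ = - ⟪d, b - a⟫ := by
      rw [show a - b = -(b - a) by abel, inner_neg_right]
    have h9 : ⟪b, a⟫ = ⟪a, b⟫ := real_inner_comm _ _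
    rw [h6, h7, h8, h9] at h5
    set X : ℝ := ⟪a, b⟫ - ‖a‖ ^ 2 - r * ⟪d, b - a⟫ with hX
    set Y : ℝ := ⟪a, b⟫ - ‖b‖ ^ 2 - s * -⟪d, b - a⟫ with hY
    have h10 : 0 ≤ X * s + Y * r := by
      have hm := mul_nonneg h5 (mul_pos hr hs).le
      have he : (X / r + Y / s) * (r * s) = X * s + Y * r := by
        field_simp
      rwa [he] at hm
    have hcs : ⟪a, b⟫ ≤ ‖a‖ * ‖b‖ := real_inner_le_norm a b
    rw [hX, hY] at h10
    nlinarith [h10, hcs, mul_pos hr hs]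
  constructor
  · intro r hr s hs hrs
    have hr' : (0:ℝ) < r := hr
    have hs' : (0:ℝ) < s := hs
    show ‖prox r (v + r • d) - v‖ ≤ ‖prox s (v + s • d) - v‖
    exact (prox_alg (norm_nonneg _) (norm_nonneg _) hr' hs' hrs (key r s hr' hs')).1
  · intro r hr s hs hrs
    have hr' : (0:ℝ) < r := hr
    have hs' : (0:ℝ) < s := hs
    show ‖prox s (v + s • d) - v‖ / s ≤ ‖prox r (v + r • d) - v‖ / r
    rw [div_le_div_iff₀ hs' hr']
    exact (prox_alg (norm_nonneg _) (norm_nonneg _) hr' hs' hrs (key r s hr' hs')).2
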